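/- Let p be prime and s ≥ 1, and let n = p^s. For every partition σ of n all of whose parts are at most n - 2, the multinomial coefficient n!/∏σ_i! is divisible by p. -/
import Mathlib


/-- The multinomial coefficient of a partition given as a multiset. -/
def multinom (n : ℕ) (σ : Multiset ℕ) : ℕ :=
  n.factorial / (σ.map Nat.factorial).prod

/-- σ is a partition of n: positive parts summing to n. -/
def IsPartition (n : ℕ) (σ : Multiset ℕ) : Prop :=
  (∀ x ∈ σ, 0 < x) ∧ σ.sum = n

lemma prod_factorial_dvd_factorial_sum' (σ : Multiset ℕ) :
    (σ.map Nat.factorial).prod ∣ σ.sum.factorial := by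
  induction σ using Multiset.induction with
  | empty => simp
  | cons a τ ih =>
    simp only [Multiset.map_cons, Multiset.prod_cons, Multiset.sum_cons]
    calc a.factorial * (τ.map Nat.factorial).prod
        ∣ a.factorial * τ.sum.factorial := mul_dvd_mul_left _ ih
      _ ∣ (a + τ.sum).factorial := Nat.factorial_mul_factorial_dvd_factorial_add _ _

theorem prime_pow_all_dvd (p s : ℕ) (hp : p.Prime) (hs : 1 ≤ s)
    (σ : Multiset ℕ) (hσ : IsPartition (p ^ s) σ)
    (hparts : ∀ x ∈ σ, x ≤ p ^ s - 2) :
    p ∣ multinom (p ^ s) σ := by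
  obtain ⟨hpos, hsum⟩ := hσ
  set n := p ^ s with hn
  have hn2 : 2 ≤ n := by
    calc 2 ≤ p := hp.two_le
    _ ≤ p ^ s := Nat.le_self_pow (by omega) p
  have hσne : σ ≠ 0 := by
    rintro rfl; simp at hsum; omega
  obtain ⟨a, ha⟩ := Multiset.exists_mem_of_ne_zero hσne
  set τ := σ.erase a with hτ
  have hcons : σ = a ::ₘ τ := (Multiset.cons_erase ha).symm
  have hapos : 0 < a := hpos a ha
  have hale : a ≤ n - 2 := hparts a ha
  have haln : a ≤ n := by omega
  have htsum : τ.sum = n - a := by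
    have := hsum
    rw [hcons, Multiset.sum_cons] at this
    omega
  set P := (τ.map Nat.factorial).prod with hP
  obtain ⟨q, hq⟩ : P ∣ (n - a).factorial := htsum ▸ prod_factorial_dvd_factorial_sum' τ
  have hPpos : 0 < P := Multiset.prod_pos (by
    intro x hx
    obtain ⟨y, _, rfl⟩ := Multiset.mem_map.mp hx
    exact Nat.factorial_pos y)
  have hfact : n.factorial = n.choose a * q * (a.factorial * P) := by
    have h := Nat.choose_mul_factorial_mul_factorial haln
    calc n.factorial = n.choose a * a.factorial * (n - a).factorial := h.symm
      _ = n.choose a * a.factorial * (P * q) := by rw [hq]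
      _ = n.choose a * q * (a.factorial * P) := by ring
  have hmult : multinom n σ = n.choose a * q := by
    rw [multinom, hcons, Multiset.map_cons, Multiset.prod_cons, ← hP, hfact,
      Nat.mul_div_cancel _ (by positivity)]
  rw [hmult]
  exact Dvd.dvd.mul_right (hp.dvd_choose_pow (by omega) (by omega)) q
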